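/- Elimination of the Eulerian terms E_{r+s−j,j} for q ≤ j ≤ p−1 in the (r+1)-th level (the content of recursion (3.6) in the proof of Theorem 3.4, case q < p): fix integers 1 ≤ s < r, integers q, p with 0 ≤ q < p ≤ s, and real numbers b_q, …, b_r with b_q ≠ 0; set v_r := ∑_{j=q}^{r} b_j·E_{r−j,j}. Then for every choice of real numbers β_q, …, β_{p−1} there exist real numbers c_0, …, c_{p−q−1} and real numbers γ_m for p ≤ m ≤ r + p − q − 1 such that [ ∑_{j=0}^{p−q−1} c_j·E_{s−j,j} , v_r ] = ∑_{m=q}^{p−1} β_m·E_{r+s−m,m} + ∑_{m=p}^{r+p−q−1} γ_m·E_{r+s−m,m} as maps ℝ⁴ → ℝ⁴. -/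

import Mathlib

/-- Lie bracket of vector fields on ℝ⁴: [V,W](x) = DV(x)(W(x)) − DW(x)(V(x)). -/
noncomputable def bracket (V W : (Fin 4 → ℝ) → (Fin 4 → ℝ)) : (Fin 4 → ℝ) → (Fin 4 → ℝ) :=
  fun x => fderiv ℝ V x (W x) - fderiv ℝ W x (V x)

/-- The Eulerian vector field E₀₀(x) = x. -/
def E00 : (Fin 4 → ℝ) → (Fin 4 → ℝ) := fun x => x

/-- The rotational vector fields Θ¹₀₀(x) = (−y₁, x₁, 0, 0) and Θ²₀₀(x) = (0, 0, −y₂, x₂). -/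
def Theta0 (i : Fin 2) : (Fin 4 → ℝ) → (Fin 4 → ℝ) :=
  if i = 0 then (fun x => ![-(x 1), x 0, 0, 0]) else (fun x => ![0, 0, -(x 3), x 2])

/-- Z_{m,n}(x) = (x₁² + y₁²)^m (x₂² + y₂²)^n. -/
def Z (m n : ℕ) : (Fin 4 → ℝ) → ℝ :=
  fun x => ((x 0) ^ 2 + (x 1) ^ 2) ^ m * ((x 2) ^ 2 + (x 3) ^ 2) ^ n

/-- E_{m,n} = Z_{m,n} · E₀₀. -/
def Emn (m n : ℕ) : (Fin 4 → ℝ) → (Fin 4 → ℝ) := fun x => Z m n x • E00 x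

/-- Θ^i_{m,n} = Z_{m,n} · Θ^i₀₀. -/
def Thmn (i : Fin 2) (m n : ℕ) : (Fin 4 → ℝ) → (Fin 4 → ℝ) := fun x => Z m n x • Theta0 i x

/-! ### Auxiliary lemmas -/

section Aux
variable (x : Fin 4 → ℝ)

lemma proj_hasFDerivAt' (i : Fin 4) : HasFDerivAt (fun y : Fin 4 → ℝ => y i)
    (ContinuousLinearMap.proj (R := ℝ) (φ := fun _ : Fin 4 => ℝ) i) x :=
  (ContinuousLinearMap.proj (R := ℝ) (φ := fun _ : Fin 4 => ℝ) i).hasFDerivAt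

lemma f1_hasFDerivAt' : ∃ L : (Fin 4 → ℝ) →L[ℝ] ℝ,
    HasFDerivAt (fun y : Fin 4 → ℝ => (y 0) ^ 2 + (y 1) ^ 2) L x ∧
      L x = 2 * ((x 0) ^ 2 + (x 1) ^ 2) := by
  have h := ((proj_hasFDerivAt' x 0).mul (proj_hasFDerivAt' x 0)).add
    ((proj_hasFDerivAt' x 1).mul (proj_hasFDerivAt' x 1))
  refine ⟨_, by simpa [sq, Pi.mul_def, Pi.add_def] using h, ?_⟩
  simp [ContinuousLinearMap.add_apply]
  ring

lemma f2_hasFDerivAt' : ∃ L : (Fin 4 → ℝ) →L[ℝ] ℝ,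
    HasFDerivAt (fun y : Fin 4 → ℝ => (y 2) ^ 2 + (y 3) ^ 2) L x ∧
      L x = 2 * ((x 2) ^ 2 + (x 3) ^ 2) := by
  have h := ((proj_hasFDerivAt' x 2).mul (proj_hasFDerivAt' x 2)).add
    ((proj_hasFDerivAt' x 3).mul (proj_hasFDerivAt' x 3))
  refine ⟨_, by simpa [sq, Pi.mul_def, Pi.add_def] using h, ?_⟩
  simp [ContinuousLinearMap.add_apply]
  ring

/-- Euler's identity for the homogeneous polynomials `Z m n`. -/
lemma euler_Z (m n : ℕ) :
    ∃ L : (Fin 4 → ℝ) →L[ℝ] ℝ, HasFDerivAt (Z m n) L x ∧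
      L x = (2 * ((m : ℝ) + n)) * Z m n x := by
  induction m with
  | zero =>
    induction n with
    | zero =>
      have hZ : Z 0 0 = fun _ => (1 : ℝ) := by funext y; simp [Z]
      exact ⟨0, by rw [hZ]; exact hasFDerivAt_const 1 x, by simp [hZ]⟩
    | succ n ih =>
      obtain ⟨L, hL, hLx⟩ := ih
      obtain ⟨D, hD, hDx⟩ := f2_hasFDerivAt' x
      have hZ : Z 0 (n + 1) = fun y => ((y 2) ^ 2 + (y 3) ^ 2) * Z 0 n y := by
        funext y; simp [Z, pow_succ]; ring
      refine ⟨_, by rw [hZ]; exact hD.mul hL, ?_⟩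
      have hv : Z 0 (n + 1) x = ((x 2) ^ 2 + (x 3) ^ 2) * Z 0 n x := by rw [hZ]
      simp only [ContinuousLinearMap.add_apply, ContinuousLinearMap.smul_apply,
        smul_eq_mul, hLx, hDx, hv]
      push_cast; ring
  | succ m ih =>
    obtain ⟨L, hL, hLx⟩ := ih
    obtain ⟨D, hD, hDx⟩ := f1_hasFDerivAt' x
    have hZ : Z (m + 1) n = fun y => ((y 0) ^ 2 + (y 1) ^ 2) * Z m n y := by
      funext y; simp [Z, pow_succ]; ring
    refine ⟨_, by rw [hZ]; exact hD.mul hL, ?_⟩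
    have hv : Z (m + 1) n x = ((x 0) ^ 2 + (x 1) ^ 2) * Z m n x := by rw [hZ]
    simp only [ContinuousLinearMap.add_apply, ContinuousLinearMap.smul_apply,
      smul_eq_mul, hLx, hDx, hv]
    push_cast; ring

/-- Euler's identity for sums of `Z`s homogeneous of one common degree. -/
lemma euler_sum (S : Finset ℕ) (a : ℕ → ℝ) (mf nf : ℕ → ℕ) (d : ℕ)
    (hd : ∀ j ∈ S, mf j + nf j = d) :
    ∃ L : (Fin 4 → ℝ) →L[ℝ] ℝ,
      HasFDerivAt (fun y => ∑ j ∈ S, a j * Z (mf j) (nf j) y) L x ∧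
      L x = (2 * (d : ℝ)) * ∑ j ∈ S, a j * Z (mf j) (nf j) x := by
  choose L hL hLx using fun j => euler_Z x (mf j) (nf j)
  refine ⟨∑ j ∈ S, a j • L j, ?_, ?_⟩
  · exact HasFDerivAt.fun_sum (fun j _ => (hL j).const_mul (a j))
  · rw [ContinuousLinearMap.sum_apply, Finset.mul_sum]
    refine Finset.sum_congr rfl fun j hj => ?_
    rw [ContinuousLinearMap.smul_apply, smul_eq_mul, hLx j, ← hd j hj]
    push_cast; ring

/-- The bracket of two radial fields `P·x`, `Q·x`. -/
lemma bracket_smul_id (P Q : (Fin 4 → ℝ) → ℝ) (P' Q' : (Fin 4 → ℝ) →L[ℝ] ℝ)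
    (hP : HasFDerivAt P P' x) (hQ : HasFDerivAt Q Q' x) :
    bracket (fun y => P y • E00 y) (fun y => Q y • E00 y) x
      = (Q x * P' x - P x * Q' x) • x := by
  have hF : HasFDerivAt (fun y : Fin 4 → ℝ => P y • E00 y)
      (P x • ContinuousLinearMap.id ℝ (Fin 4 → ℝ) + P'.smulRight x) x :=
    hP.smul (hasFDerivAt_id x)
  have hG : HasFDerivAt (fun y : Fin 4 → ℝ => Q y • E00 y)
      (Q x • ContinuousLinearMap.id ℝ (Fin 4 → ℝ) + Q'.smulRight x) x :=
    hQ.smul (hasFDerivAt_id x)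
  show fderiv ℝ (fun y : Fin 4 → ℝ => P y • E00 y) x ((fun y : Fin 4 → ℝ => Q y • E00 y) x)
      - fderiv ℝ (fun y : Fin 4 → ℝ => Q y • E00 y) x ((fun y : Fin 4 → ℝ => P y • E00 y) x)
      = (Q x * P' x - P x * Q' x) • x
  rw [hF.fderiv, hG.fderiv]
  simp only [ContinuousLinearMap.add_apply, ContinuousLinearMap.smul_apply,
    ContinuousLinearMap.id_apply, ContinuousLinearMap.smulRight_apply,
    map_smul, smul_eq_mul, E00]
  module

lemma Z_mul (a b a' b' : ℕ) : Z a b x * Z a' b' x = Z (a + a') (b + b') x := by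
  simp [Z, pow_add]; ring

end Aux

/-- The recursively defined coefficients `c`. -/
noncomputable def cAux (b β : ℕ → ℝ) (q : ℕ) (K : ℝ) : ℕ → ℝ
  | k => (β (q + k) * K
      - ∑ j ∈ (Finset.range k).attach, cAux b β q K j.1 * b (q + k - j.1)) / b q
  decreasing_by exact Finset.mem_range.mp j.2

lemma cAux_eq (b β : ℕ → ℝ) (q : ℕ) (K : ℝ) (k : ℕ) :
    cAux b β q K k = (β (q + k) * K
      - ∑ j ∈ Finset.range k, cAux b β q K j * b (q + k - j)) / b q := by
  rw [cAux, Finset.sum_attach (Finset.range k) (fun j => cAux b β q K j * b (q + k - j))]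

/-- elimination of the Eulerian terms E_{r+s−j,j} for q ≤ j ≤ p−1 in the
(r+1)-th level (recursion (3.6), case q < p). -/
theorem eulerian_elimination_r_level (s r p q : ℕ) (hs : 1 ≤ s) (hsr : s < r)
    (hqp : q < p) (hp : p ≤ s) (b : ℕ → ℝ) (hb : b q ≠ 0) (β : ℕ → ℝ) :
    ∃ c γ : ℕ → ℝ,
      bracket (fun x => ∑ j ∈ Finset.range (p - q), c j • Emn (s - j) j x)
              (fun x => ∑ j ∈ Finset.Icc q r, b j • Emn (r - j) j x) =
      (fun x : Fin 4 → ℝ =>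
        (∑ m ∈ Finset.Icc q (p - 1), β m • Emn (r + s - m) m x) +
          ∑ m ∈ Finset.Icc p (r + p - q - 1), γ m • Emn (r + s - m) m x) := by
  classical
  set k2 : ℝ := 2 * (s : ℝ) - 2 * r with hk2def
  have hk2 : k2 ≠ 0 := by
    have : (s : ℝ) < r := by exact_mod_cast hsr
    simp only [hk2def]; intro h; nlinarith
  set K : ℝ := k2⁻¹ with hKdef
  set c : ℕ → ℝ := cAux b β q K with hcdef
  set A : ℕ → ℝ := fun m => ∑ j ∈ Finset.range (p - q),
    if m ∈ Finset.Icc (j + q) (j + r) then c j * b (m - j) else 0 with hAdef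
  refine ⟨c, fun m => k2 * A m, ?_⟩
  set P : (Fin 4 → ℝ) → ℝ := fun y => ∑ j ∈ Finset.range (p - q), c j * Z (s - j) j y with hPdef
  set Q : (Fin 4 → ℝ) → ℝ := fun y => ∑ j ∈ Finset.Icc q r, b j * Z (r - j) j y with hQdef
  have eF : (fun x => ∑ j ∈ Finset.range (p - q), c j • Emn (s - j) j x)
      = fun y => P y • E00 y := by
    funext y; simp only [hPdef, Emn, smul_smul, Finset.sum_smul]
  have eG : (fun x => ∑ j ∈ Finset.Icc q r, b j • Emn (r - j) j x)
      = fun y => Q y • E00 y := by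
    funext y; simp only [hQdef, Emn, smul_smul, Finset.sum_smul]
  rw [eF, eG]
  funext x
  -- derivatives
  obtain ⟨LP, hLP, hLPx⟩ := euler_sum x (Finset.range (p - q)) c (fun j => s - j) id s
    (fun j hj => by simp only [Finset.mem_range] at hj; show s - j + j = s; omega)
  obtain ⟨LQ, hLQ, hLQx⟩ := euler_sum x (Finset.Icc q r) b (fun j => r - j) id r
    (fun j hj => by simp only [Finset.mem_Icc] at hj; show r - j + j = r; omega)
  have hPx : ∑ j ∈ Finset.range (p - q), c j * Z (s - j) (id j) x = P x := rfl
  have hQx : ∑ j ∈ Finset.Icc q r, b j * Z (r - j) (id j) x = Q x := rfl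
  have hbr := bracket_smul_id x P Q LP LQ hLP hLQ
  rw [hbr, hLPx, hLQx, hPx, hQx]
  -- rewrite RHS as a scalar multiple of x
  have eR : (∑ m ∈ Finset.Icc q (p - 1), β m • Emn (r + s - m) m x) +
      ∑ m ∈ Finset.Icc p (r + p - q - 1), (k2 * A m) • Emn (r + s - m) m x
      = ((∑ m ∈ Finset.Icc q (p - 1), β m * Z (r + s - m) m x) +
          ∑ m ∈ Finset.Icc p (r + p - q - 1), (k2 * A m) * Z (r + s - m) m x) • x := by
    simp only [Emn, E00, smul_smul, add_smul, Finset.sum_smul]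
  rw [eR]
  -- now a scalar identity
  have step1 : P x * Q x = ∑ j ∈ Finset.range (p - q), ∑ j' ∈ Finset.Icc q r,
      c j * b j' * Z (r + s - (j + j')) (j + j') x := by
    rw [hPdef, hQdef, Finset.sum_mul_sum]
    refine Finset.sum_congr rfl fun j hj => Finset.sum_congr rfl fun j' hj' => ?_
    simp only [Finset.mem_range] at hj
    simp only [Finset.mem_Icc] at hj'
    rw [mul_mul_mul_comm, Z_mul]
    congr 2 <;> omega
  have step2 : ∀ j ∈ Finset.range (p - q),
      ∑ j' ∈ Finset.Icc q r, c j * b j' * Z (r + s - (j + j')) (j + j') x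
      = ∑ m ∈ Finset.Icc q (r + p - q - 1),
          if m ∈ Finset.Icc (j + q) (j + r) then c j * b (m - j) * Z (r + s - m) m x else 0 := by
    intro j hj
    simp only [Finset.mem_range] at hj
    rw [Finset.sum_ite_mem]
    have hint : Finset.Icc q (r + p - q - 1) ∩ Finset.Icc (j + q) (j + r)
        = Finset.Icc (j + q) (j + r) := by
      ext m; simp only [Finset.mem_inter, Finset.mem_Icc]; omega
    rw [hint, ← Finset.map_add_left_Icc q r j, Finset.sum_map]
    refine Finset.sum_congr rfl fun j' hj' => ?_
    simp only [addLeftEmbedding_apply, Nat.add_sub_cancel_left]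
  have step3 : P x * Q x = ∑ m ∈ Finset.Icc q (r + p - q - 1), A m * Z (r + s - m) m x := by
    rw [step1, Finset.sum_congr rfl step2, Finset.sum_comm]
    refine Finset.sum_congr rfl fun m _ => ?_
    rw [hAdef, Finset.sum_mul]
    refine Finset.sum_congr rfl fun j _ => ?_
    split_ifs <;> simp [mul_assoc]
  -- coefficient identity on the low range
  have hcoeff : ∀ m ∈ Finset.Icc q (p - 1), k2 * A m = β m := by
    intro m hm
    simp only [Finset.mem_Icc] at hm
    obtain ⟨hqm, hmp⟩ := hm
    set k := m - q with hk
    have hmqk : m = q + k := by omega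
    have hkpq : k + 1 ≤ p - q := by omega
    have hA : A m = ∑ j ∈ Finset.range (k + 1), c j * b (m - j) := by
      have hfil : ∀ j ∈ Finset.range (p - q),
          (if m ∈ Finset.Icc (j + q) (j + r) then c j * b (m - j) else 0)
          = if j ∈ Finset.range (k + 1) then c j * b (m - j) else 0 := by
        intro j hj
        simp only [Finset.mem_range] at hj
        simp only [Finset.mem_Icc, Finset.mem_range]
        congr 1
        simp only [eq_iff_iff]
        omega
      show (∑ j ∈ Finset.range (p - q),
          if m ∈ Finset.Icc (j + q) (j + r) then c j * b (m - j) else 0) = _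
      rw [Finset.sum_congr rfl hfil, ← Finset.sum_filter]
      congr 1
      ext j
      simp only [Finset.mem_filter, Finset.mem_range]
      omega
    rw [hA, Finset.sum_range_succ]
    have hck : c k * b (m - k) = β m * K - ∑ j ∈ Finset.range k, c j * b (m - j) := by
      have : m - k = q := by omega
      rw [this, hcdef, cAux_eq, div_mul_cancel₀ _ hb, ← hmqk]
    rw [hck]
    field_simp [hKdef]
    rw [hKdef, add_sub_cancel, mul_comm, inv_mul_cancel_right₀ hk2]
  -- split the big interval
  have hsplit : Finset.Icc q (r + p - q - 1)
      = Finset.Icc q (p - 1) ∪ Finset.Icc p (r + p - q - 1) := by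
    ext m; simp only [Finset.mem_union, Finset.mem_Icc]; omega
  have hdis : Disjoint (Finset.Icc q (p - 1)) (Finset.Icc p (r + p - q - 1)) := by
    simp only [Finset.disjoint_left, Finset.mem_Icc]
    intro m h1 h2; omega
  -- the main computation
  calc (Q x * ((2 * (s : ℝ)) * P x) - P x * ((2 * (r : ℝ)) * Q x)) • x
      = (k2 * (P x * Q x)) • x := by rw [hk2def]; congr 1; ring
    _ = ((∑ m ∈ Finset.Icc q (p - 1), β m * Z (r + s - m) m x) +
          ∑ m ∈ Finset.Icc p (r + p - q - 1), (k2 * A m) * Z (r + s - m) m x) • x := by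
        congr 1
        rw [step3, Finset.mul_sum, hsplit, Finset.sum_union hdis]
        congr 1
        · refine Finset.sum_congr rfl fun m hm => ?_
          rw [← mul_assoc, hcoeff m hm]
        · refine Finset.sum_congr rfl fun m hm => ?_
          ring
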